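/- Let p ≥ 7 be prime and a ∈ [3, p-3]. Then the argument of the Fourier coefficient F_{I'}(1) = Σ_{x ∈ I'} e^{-2πix/p}, where I' = {0,1,...,a-2} ∪ {a} ⊆ Z_p, is not an integer multiple of π/p. -/

import Mathlib

/-- Fourier coefficient `F_A(γ) = ∑_{x ∈ A} ω^{-xγ}` with `ω = e^{2πi/p}`. -/
noncomputable def Fc {p : ℕ} [NeZero p] (A : Finset (ZMod p)) (γ : ZMod p) : ℂ :=
  ∑ x ∈ A, Complex.exp (-(2 * Real.pi * Complex.I) * ((x.val * γ.val : ℕ) : ℂ) / p)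

/-- The punctured interval `I' = {0, ..., a-2, a}` in `ZMod p`. -/
def puncturedInterval (p a : ℕ) : Finset (ZMod p) :=
  insert (a : ZMod p) ((Finset.range (a - 1)).image (fun j : ℕ => (j : ZMod p)))

open Real

section Aux

private lemma key' (A B : ℝ) : 2 * sin A * sin B = cos (A - B) - cos (A + B) := by
  rw [cos_sub, cos_add]; ring

private lemma ident5 (x y z : ℝ) :
    sin x * sin (y+z) - sin (x+y-z-z)*sin z = sin (x+y)*sin z + sin (x-z-z)*sin (y-z) := by
  linear_combination (norm := ring_nf)
    (key' x (y+z) - key' (x+y-z-z) z - key' (x+y) z - key' (x-z-z) (y-z))/2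

private lemma ident2 (x y z : ℝ) :
    2*sin z*sin (x+y+y) + (cos (x-z) - cos (x+y+y-z-z-z))
      = 2*(sin (x+y)*sin (y+z) - sin (x+y+y-z-z)*sin z) := by
  linear_combination (norm := ring_nf) key' (x+y+y) z - key' (x+y) (y+z) + key' (x+y+y-z-z) z

private lemma tele (x θ : ℝ) (m : ℕ) :
    ∑ j ∈ Finset.range m, 2 * sin (x + 2*j*θ) * sin θ = cos (x - θ) - cos (x + (2*m-1)*θ) := by
  induction m with
  | zero =>
      have : x + (2*((0:ℕ):ℝ)-1)*θ = x - θ := by push_cast; ring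
      simp [this]
      ring_nf
  | succ m ih =>
      rw [Finset.sum_range_succ, ih]
      have h := key' (x + 2*m*θ) θ
      push_cast
      linear_combination (norm := ring_nf) h

private lemma sin_lt_sin' {x y : ℝ} (hx : 0 < x) (hxy : x < y) (hy : y < π - x) :
    sin x < sin y := by
  have hx2 : x < π / 2 := by nlinarith
  rcases le_or_gt y (π / 2) with h | h
  · exact strictMonoOn_sin ⟨by linarith [pi_pos], le_of_lt hx2⟩ ⟨by linarith [pi_pos], h⟩ hxy
  · rw [← Real.sin_pi_sub y]
    exact strictMonoOn_sin ⟨by linarith [pi_pos], le_of_lt hx2⟩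
      ⟨by linarith [pi_pos], by linarith⟩ (by linarith)

set_option maxHeartbeats 1000000 in
private lemma U_ne_zero (p a : ℕ) (hp : p.Prime) (hp7 : 7 ≤ p) (ha : 3 ≤ a) (ha3 : a + 3 ≤ p)
    (r : ℤ) (hr0 : 0 ≤ r) (hr1 : r < p) :
    Real.sin (r * (π / p)) * Real.sin ((a + 1) * (π / p))
      - Real.sin ((r + a - 2) * (π / p)) * Real.sin (π / p) ≠ 0 := by
  set θ : ℝ := π / p with hθ
  have hppos : (0:ℝ) < p := by positivity
  have hθpos : 0 < θ := by positivity
  have hpθ : (p:ℝ) * θ = π := by rw [hθ]; field_simp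
  have sinpos : ∀ t : ℝ, 0 < t → t < p → 0 < Real.sin (t * θ) := by
    intro t h1 h2
    apply Real.sin_pos_of_pos_of_lt_pi (by positivity)
    calc t * θ < p * θ := by exact mul_lt_mul_of_pos_right h2 hθpos
      _ = π := hpθ
  have sinnonneg : ∀ t : ℝ, 0 ≤ t → t ≤ p → 0 ≤ Real.sin (t * θ) := by
    intro t h1 h2
    apply Real.sin_nonneg_of_nonneg_of_le_pi (by positivity)
    calc t * θ ≤ p * θ := by exact mul_le_mul_of_nonneg_right h2 (le_of_lt hθpos)
      _ = π := hpθ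
  have har : (3:ℝ) ≤ (a:ℝ) := by exact_mod_cast ha
  have harp : (a:ℝ) + 3 ≤ (p:ℝ) := by exact_mod_cast ha3
  have hp7r : (7:ℝ) ≤ (p:ℝ) := by exact_mod_cast hp7
  have hr0r : (0:ℝ) ≤ (r:ℝ) := by exact_mod_cast hr0
  have hr1r : (r:ℝ) < (p:ℝ) := by exact_mod_cast hr1
  have hsθ : 0 < Real.sin θ := by
    have := sinpos 1 one_pos (by exact_mod_cast hp.one_lt)
    simpa using this
  have hsa1 : 0 < Real.sin (((a:ℝ) + 1) * θ) := sinpos _ (by linarith) (by linarith)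
  intro hU
  have hcase : r = 0 ∨ r = 1 ∨ (2 ≤ r ∧ r + a ≤ p) ∨ ((2:ℤ) ≤ r ∧ r + a = p + 1)
      ∨ (2 ≤ r ∧ (p:ℤ) + 2 ≤ r + a) := by omega
  rcases hcase with h | h | ⟨h2, h⟩ | ⟨h2, h⟩ | ⟨h2, h⟩
  · -- r = 0
    subst h
    rw [show (((0:ℤ):ℝ) + ↑a - 2) * θ = ((a:ℝ) - 2) * θ by push_cast; ring,
        show (((0:ℤ):ℝ)) * θ = 0 by push_cast; ring] at hU
    have h1 : 0 < Real.sin (((a:ℝ) - 2) * θ) := sinpos _ (by linarith) (by linarith)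
    simp only [Real.sin_zero, zero_mul, zero_sub, neg_eq_zero] at hU
    nlinarith
  · -- r = 1
    subst h
    rw [show (((1:ℤ):ℝ) + ↑a - 2) * θ = ((a:ℝ) - 1) * θ by push_cast; ring,
        show (((1:ℤ):ℝ)) * θ = θ by push_cast; ring] at hU
    have h5 : Real.sin θ * (Real.sin (((a:ℝ)+1)*θ) - Real.sin (((a:ℝ)-1)*θ)) = 0 := by
      linear_combination hU
    have h6 : Real.sin (((a:ℝ)+1)*θ) - Real.sin (((a:ℝ)-1)*θ) = 0 := by
      rcases mul_eq_zero.mp h5 with h' | h'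
      · exact absurd h' (ne_of_gt hsθ)
      · exact h'
    rw [Real.sin_sub_sin, show (((a:ℝ)+1)*θ - ((a:ℝ)-1)*θ)/2 = θ by ring,
        show (((a:ℝ)+1)*θ + ((a:ℝ)-1)*θ)/2 = (a:ℝ)*θ by ring] at h6
    have h7 : Real.cos ((a:ℝ)*θ) = 0 := by
      rcases mul_eq_zero.mp h6 with h' | h'
      · nlinarith
      · exact h'
    obtain ⟨k, hk⟩ := Real.cos_eq_zero_iff.mp h7
    rw [hθ] at hk
    have hπ : (π:ℝ) ≠ 0 := Real.pi_ne_zero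
    have hp0 : (p:ℝ) ≠ 0 := ne_of_gt hppos
    have h8 : (2*(a:ℝ)) * π = ((2*(k:ℝ)+1)*(p:ℝ)) * π := by
      field_simp at hk
      linear_combination π * hk
    have h9 : (2*(a:ℝ)) = (2*(k:ℝ)+1)*(p:ℝ) := mul_right_cancel₀ hπ h8
    have hz : (2*(a:ℤ)) = (2*k+1)*(p:ℤ) := by exact_mod_cast h9
    obtain ⟨t, ht⟩ := hp.odd_of_ne_two (by omega)
    have htz : (p:ℤ) = 2*(t:ℤ)+1 := by exact_mod_cast ht
    have hm : 2*(a:ℤ) = 2*(k*(p:ℤ)) + p := by linear_combination hz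
    set m := k*(p:ℤ) with hmdef
    omega
  · -- 2 ≤ r, r + a ≤ p
    have h5 := ident5 ((r:ℝ)*θ) ((a:ℝ)*θ) θ
    have hsum : Real.sin (((r:ℝ)+↑a)*θ) * Real.sin θ
        + Real.sin (((r:ℝ)-2)*θ) * Real.sin (((a:ℝ)-1)*θ) = 0 := by
      linear_combination (norm := ring_nf) hU - h5
    have h2r : (2:ℝ) ≤ (r:ℝ) := by exact_mod_cast h2
    have hrap : (r:ℝ) + (a:ℝ) ≤ (p:ℝ) := by exact_mod_cast h
    have hA : 0 ≤ Real.sin (((r:ℝ)+↑a)*θ) := sinnonneg _ (by linarith) (by linarith)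
    have hD : 0 ≤ Real.sin (((r:ℝ)-2)*θ) := sinnonneg _ (by linarith) (by linarith)
    have hB : 0 < Real.sin (((a:ℝ)-1)*θ) := sinpos _ (by linarith) (by linarith)
    have hA0 : Real.sin (((r:ℝ)+↑a)*θ) = 0 := by
      have h1 : Real.sin (((r:ℝ)+↑a)*θ) * Real.sin θ = 0 :=
        le_antisymm (by nlinarith [mul_nonneg hD hB.le]) (mul_nonneg hA hsθ.le)
      rcases mul_eq_zero.mp h1 with h' | h'
      · exact h'
      · exact absurd h' (ne_of_gt hsθ)
    have hD0 : Real.sin (((r:ℝ)-2)*θ) = 0 := by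
      have h1 : Real.sin (((r:ℝ)-2)*θ) * Real.sin (((a:ℝ)-1)*θ) = 0 :=
        le_antisymm (by nlinarith [mul_nonneg hA hsθ.le]) (mul_nonneg hD hB.le)
      rcases mul_eq_zero.mp h1 with h' | h'
      · exact h'
      · exact absurd h' (ne_of_gt hB)
    have hra : (r:ℤ) + a = p := by
      by_contra hne
      have hlt : (r:ℤ) + a < p := by omega
      have hltr : (r:ℝ) + (a:ℝ) < (p:ℝ) := by exact_mod_cast hlt
      have := sinpos ((r:ℝ)+↑a) (by linarith) hltr
      linarith
    have hr2 : r = 2 := by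
      by_contra hne
      have hlt : (2:ℤ) < r := by omega
      have hltr : (2:ℝ) < (r:ℝ) := by exact_mod_cast hlt
      have := sinpos ((r:ℝ)-2) (by linarith) (by linarith)
      linarith
    omega
  · -- r + a = p + 1
    have hrr : (r:ℝ) + (a:ℝ) = (p:ℝ) + 1 := by exact_mod_cast h
    have h2r : (2:ℝ) ≤ (r:ℝ) := by exact_mod_cast h2
    have e : ((r:ℝ)+↑a-2)*θ = π - θ := by
      have h' : ((r:ℝ)+↑a-2)*θ = (p:ℝ)*θ - θ := by
        rw [show (r:ℝ)+↑a-2 = (p:ℝ) - 1 by linarith]; ring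
      rw [h', hpθ]
    rw [e, Real.sin_pi_sub] at hU
    have hr4 : (4:ℝ) ≤ (r:ℝ) := by
      have h' : (4:ℤ) ≤ r := by omega
      exact_mod_cast h'
    have hrp2 : (r:ℝ) ≤ (p:ℝ) - 2 := by linarith
    have h1 : Real.sin θ < Real.sin ((r:ℝ)*θ) := by
      apply sin_lt_sin' hθpos
      · have := mul_lt_mul_of_pos_right (show (1:ℝ) < (r:ℝ) by linarith) hθpos
        linarith
      · have := mul_lt_mul_of_pos_right (show (r:ℝ)+1 < (p:ℝ) by linarith) hθpos
        rw [hpθ] at this; linarith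
    have hb1 : Real.sin θ < Real.sin (((a:ℝ)+1)*θ) := by
      apply sin_lt_sin' hθpos
      · have := mul_lt_mul_of_pos_right (show (1:ℝ) < (a:ℝ)+1 by linarith) hθpos
        linarith
      · have := mul_lt_mul_of_pos_right (show (a:ℝ)+2 < (p:ℝ) by linarith) hθpos
        rw [hpθ] at this; linarith
    have := mul_lt_mul'' h1 hb1 hsθ.le hsθ.le
    linarith
  · -- p + 2 ≤ r + a
    have hrar : (p:ℝ) + 2 ≤ (r:ℝ) + (a:ℝ) := by exact_mod_cast h
    have h2r : (2:ℝ) ≤ (r:ℝ) := by exact_mod_cast h2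
    have hsle : Real.sin (((r:ℝ)+↑a-2)*θ) ≤ 0 := by
      have hb1 : π ≤ ((r:ℝ)+↑a-2)*θ := by
        have := mul_le_mul_of_nonneg_right (show (p:ℝ) ≤ (r:ℝ)+↑a-2 by linarith) hθpos.le
        rw [hpθ] at this; linarith
      have hb2 : ((r:ℝ)+↑a-2)*θ - π ≤ π := by
        have : ((r:ℝ)+↑a-2)*θ ≤ ((p:ℝ)+(p:ℝ))*θ :=
          mul_le_mul_of_nonneg_right (by linarith) hθpos.le
        have h2p : ((p:ℝ)+(p:ℝ))*θ = π + π := by rw [add_mul, hpθ]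
        linarith
      have hsn : (0:ℝ) ≤ Real.sin (((r:ℝ)+↑a-2)*θ - π) :=
        Real.sin_nonneg_of_nonneg_of_le_pi (by linarith) hb2
      rw [Real.sin_sub_pi] at hsn
      linarith
    have hr : 0 < Real.sin ((r:ℝ)*θ) := sinpos _ (by linarith) hr1r
    have hbb : Real.sin (((r:ℝ)+↑a-2)*θ) * Real.sin θ ≤ 0 :=
      mul_nonpos_of_nonpos_of_nonneg hsle hsθ.le
    have hgg : 0 < Real.sin ((r:ℝ)*θ) * Real.sin (((a:ℝ)+1)*θ) := mul_pos hr hsa1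
    linarith

private lemma Fc_eq (p a : ℕ) [NeZero p] (hp : 1 < p) (ha : a < p) :
    Fc (puncturedInterval p a) 1 = Complex.exp (-(2 * Real.pi * Complex.I) * a / p)
      + ∑ j ∈ Finset.range (a - 1), Complex.exp (-(2 * Real.pi * Complex.I) * j / p) := by
  haveI : Fact (1 < p) := ⟨hp⟩
  have hmem : (a : ZMod p) ∉ (Finset.range (a - 1)).image (fun j : ℕ => (j : ZMod p)) := by
    intro h
    obtain ⟨j, hj, hje⟩ := Finset.mem_image.mp h
    have := congrArg ZMod.val hje
    rw [ZMod.val_cast_of_lt (by simp at hj; omega), ZMod.val_cast_of_lt ha] at this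
    simp at hj; omega
  have hinj : ∀ j ∈ Finset.range (a - 1), ∀ k ∈ Finset.range (a - 1),
      (j : ZMod p) = (k : ZMod p) → j = k := by
    intro j hj k hk h
    have := congrArg ZMod.val h
    simp at hj hk
    rwa [ZMod.val_cast_of_lt (by omega), ZMod.val_cast_of_lt (by omega)] at this
  rw [Fc, puncturedInterval, Finset.sum_insert hmem, Finset.sum_image hinj]
  congr 1
  · rw [ZMod.val_one, mul_one, ZMod.val_cast_of_lt ha]
  · apply Finset.sum_congr rfl
    intro j hj
    simp at hj
    rw [ZMod.val_one, mul_one, ZMod.val_cast_of_lt (by omega)]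

end Aux

set_option maxHeartbeats 1000000 in
theorem stmt_9 (p : ℕ) (hp : p.Prime) [NeZero p] (hp7 : 7 ≤ p)
    (a : ℕ) (ha : 3 ≤ a) (ha' : a ≤ p - 3) :
    ¬ ∃ n : ℤ, Complex.arg (Fc (puncturedInterval p a) 1) = n * Real.pi / p := by
  rintro ⟨n, hn⟩
  have hp1 : 1 < p := by omega
  have ha3 : a + 3 ≤ p := by omega
  have hap : a < p := by omega
  set θ : ℝ := π / p with hθ
  have hppos : (0:ℝ) < p := by positivity
  have hθpos : 0 < θ := by positivity
  have hpθ : (p:ℝ) * θ = π := by rw [hθ]; field_simp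
  have hF := Fc_eq p a hp1 hap
  set F := Fc (puncturedInterval p a) 1 with hFdef
  -- Step 2: the imaginary part of F rotated by -nπ/p vanishes
  have hmul : F * Complex.exp (-((((n:ℝ) * π / p : ℝ)):ℂ) * Complex.I)
      = ((‖F‖ : ℝ) : ℂ) := by
    conv_lhs => rw [← Complex.norm_mul_exp_arg_mul_I F]
    rw [hn, mul_assoc, ← Complex.exp_add,
      show ((((n:ℝ)*π/p : ℝ)):ℂ) * Complex.I + -((((n:ℝ)*π/p : ℝ)):ℂ) * Complex.I = 0 by ring,
      Complex.exp_zero, mul_one]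
  have him : (F * Complex.exp (-((((n:ℝ) * π / p : ℝ)):ℂ) * Complex.I)).im = 0 := by
    rw [hmul]; exact Complex.ofReal_im _
  -- Step 3: compute that imaginary part explicitly
  have hterm : ∀ c : ℕ, Complex.exp (-(2 * Real.pi * Complex.I) * c / p)
      * Complex.exp (-((((n:ℝ) * π / p : ℝ)):ℂ) * Complex.I)
      = Complex.exp (((-( (2*(c:ℝ)+(n:ℝ))*θ) : ℝ):ℂ) * Complex.I) := by
    intro c
    rw [← Complex.exp_add]
    congr 1
    rw [hθ]
    push_cast
    ring
  have him2 : (F * Complex.exp (-((((n:ℝ) * π / p : ℝ)):ℂ) * Complex.I)).im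
      = -(Real.sin ((2*(a:ℝ)+(n:ℝ))*θ))
        - ∑ j ∈ Finset.range (a-1), Real.sin ((2*(j:ℝ)+(n:ℝ))*θ) := by
    rw [hF, add_mul, Finset.sum_mul, hterm a]
    rw [Finset.sum_congr rfl (fun j _ => hterm j)]
    rw [Complex.add_im, Complex.im_sum]
    simp only [Complex.exp_ofReal_mul_I_im, Real.sin_neg]
    rw [Finset.sum_neg_distrib]
    ring
  have hS : Real.sin ((2*(a:ℝ)+(n:ℝ))*θ)
      + ∑ j ∈ Finset.range (a-1), Real.sin ((2*(j:ℝ)+(n:ℝ))*θ) = 0 := by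
    rw [him2] at him; linarith
  -- Step 4: telescope and convert to product form
  have htel := tele ((n:ℝ)*θ) θ (a-1)
  have hE : ∑ j ∈ Finset.range (a-1), 2 * Real.sin ((n:ℝ)*θ + 2*(j:ℝ)*θ) * Real.sin θ
      = 2 * Real.sin θ * ∑ j ∈ Finset.range (a-1), Real.sin ((2*(j:ℝ)+(n:ℝ))*θ) := by
    rw [Finset.mul_sum]
    apply Finset.sum_congr rfl
    intro j _
    rw [show (n:ℝ)*θ + 2*(j:ℝ)*θ = (2*(j:ℝ)+(n:ℝ))*θ by ring]
    ring
  have hcast : ((a-1:ℕ):ℝ) = (a:ℝ) - 1 := by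
    rw [Nat.cast_sub (by omega : 1 ≤ a)]; norm_num
  rw [hE, hcast] at htel
  have hC : Real.cos ((n:ℝ)*θ - θ) - Real.cos ((n:ℝ)*θ + (2*((a:ℝ)-1)-1)*θ)
      + 2 * Real.sin θ * Real.sin ((2*(a:ℝ)+(n:ℝ))*θ) = 0 := by
    linear_combination (-1 : ℝ) * htel + (2 * Real.sin θ) * hS
  have I2 := ident2 ((n:ℝ)*θ) ((a:ℝ)*θ) θ
  have hT : Real.sin (((n:ℝ)+(a:ℝ))*θ) * Real.sin (((a:ℝ)+1)*θ)
      - Real.sin (((n:ℝ)+2*(a:ℝ)-2)*θ) * Real.sin θ = 0 := by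
    linear_combination (norm := ring_nf) (hC - I2)/2
  -- Step 5: reduce modulo p
  set N : ℤ := n + (a:ℤ) with hN
  set q : ℤ := N / p with hq
  set r : ℤ := N % p with hr
  have hqr : N = (p:ℤ) * q + r := (Int.mul_ediv_add_emod N p).symm
  have hpne : ((p:ℤ)) ≠ 0 := by positivity
  have hr0 : 0 ≤ r := Int.emod_nonneg N hpne
  have hr1 : r < p := Int.emod_lt_of_pos N (by positivity)
  have hqrR : ((n:ℝ)+(a:ℝ)) = (p:ℝ)*(q:ℝ) + (r:ℝ) := by exact_mod_cast hqr
  have e1 : ((n:ℝ)+(a:ℝ))*θ = (r:ℝ)*θ + (q:ℝ)*π := by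
    calc ((n:ℝ)+(a:ℝ))*θ = ((p:ℝ)*(q:ℝ)+(r:ℝ))*θ := by rw [hqrR]
      _ = (r:ℝ)*θ + (q:ℝ)*((p:ℝ)*θ) := by ring
      _ = (r:ℝ)*θ + (q:ℝ)*π := by rw [hpθ]
  have e2 : ((n:ℝ)+2*(a:ℝ)-2)*θ = ((r:ℝ)+(a:ℝ)-2)*θ + (q:ℝ)*π := by
    calc ((n:ℝ)+2*(a:ℝ)-2)*θ = (((p:ℝ)*(q:ℝ)+(r:ℝ))+(a:ℝ)-2)*θ := by
          rw [show ((n:ℝ)+2*(a:ℝ)-2) = (((n:ℝ)+(a:ℝ))+(a:ℝ)-2) by ring, hqrR]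
      _ = ((r:ℝ)+(a:ℝ)-2)*θ + (q:ℝ)*((p:ℝ)*θ) := by ring
      _ = ((r:ℝ)+(a:ℝ)-2)*θ + (q:ℝ)*π := by rw [hpθ]
  rw [e1, e2, Real.sin_add_int_mul_pi, Real.sin_add_int_mul_pi] at hT
  have hq0 : ((-1:ℝ))^q ≠ 0 := zpow_ne_zero q (by norm_num)
  have hU' : Real.sin ((r:ℝ)*θ) * Real.sin (((a:ℝ)+1)*θ)
      - Real.sin (((r:ℝ)+(a:ℝ)-2)*θ) * Real.sin θ = 0 := by
    have h' : ((-1:ℝ))^q * (Real.sin ((r:ℝ)*θ) * Real.sin (((a:ℝ)+1)*θ)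
        - Real.sin (((r:ℝ)+(a:ℝ)-2)*θ) * Real.sin θ) = 0 := by linear_combination hT
    rcases mul_eq_zero.mp h' with h'' | h''
    · exact absurd h'' hq0
    · exact h''
  rw [hθ] at hU'
  exact U_ne_zero p a hp hp7 ha ha3 r hr0 hr1 hU'
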